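/- arXiv:2511.16514 — 2 statements merged into one kernel-verified Lean document; each statement's English description precedes it below -/
import Mathlib

section
/- Let g be the ℓ1 norm on ℝⁿ and z ∈ ℝⁿ with ‖z‖_∞ ≤ 1. Then the parallel subspace of ∂g*(z), i.e., span(∂g*(z) − x) for any x ∈ ∂g*(z), equals the set {x ∈ ℝⁿ : x_i = 0 whenever |z_i| < 1}. -/
open scoped RealInnerProductSpace
noncomputable section

/-- Legendre–Fenchel conjugate of an extended-real-valued function. -/
def fenchel {X : Type*} [NormedAddCommGroup X] [InnerProductSpace ℝ X]
    (g : X → EReal) (v : X) : EReal :=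
  ⨆ x : X, ((⟪v, x⟫ : ℝ) : EReal) - g x

/-- Convex subdifferential of an extended-real-valued function. -/
def esubdiff {X : Type*} [NormedAddCommGroup X] [InnerProductSpace ℝ X]
    (g : X → EReal) (x : X) : Set X :=
  {v | ∀ y, g x + ((⟪v, y - x⟫ : ℝ) : EReal) ≤ g y}

lemma inner_eq (n : ℕ) (v y : EuclideanSpace ℝ (Fin n)) : (⟪v, y⟫ : ℝ) = ∑ i, v i * y i := by
  simp [PiLp.inner_apply, RCLike.inner_apply, conj_trivial, mul_comm]

lemma fenchel_l1_ball (n : ℕ) (v : EuclideanSpace ℝ (Fin n)) (hv : ∀ i, |v i| ≤ 1) :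
    fenchel (fun x : EuclideanSpace ℝ (Fin n) => ((∑ i, |x i| : ℝ) : EReal)) v = 0 := by
  unfold fenchel
  apply le_antisymm
  · apply iSup_le
    intro y
    rw [← EReal.coe_sub]
    have : (⟪v, y⟫ : ℝ) - ∑ i, |y i| ≤ 0 := by
      rw [inner_eq]
      have h1 : ∑ i, v i * y i ≤ ∑ i, |y i| := by
        apply Finset.sum_le_sum
        intro i _
        calc v i * y i ≤ |v i * y i| := le_abs_self _
        _ = |v i| * |y i| := abs_mul _ _
        _ ≤ 1 * |y i| := by apply mul_le_mul_of_nonneg_right (hv i) (abs_nonneg _)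
        _ = |y i| := one_mul _
      linarith
    exact_mod_cast this
  · apply le_iSup_of_le 0
    simp

lemma fenchel_l1_top (n : ℕ) (v : EuclideanSpace ℝ (Fin n)) (i0 : Fin n) (hv : 1 < |v i0|) :
    fenchel (fun x : EuclideanSpace ℝ (Fin n) => ((∑ i, |x i| : ℝ) : EReal)) v = ⊤ := by
  unfold fenchel
  rw [iSup_eq_top]
  intro b hb
  -- term for parameter t ≥ 0: t * (|v i0| - 1)
  have key : ∀ t : ℝ, 0 ≤ t → ∃ y : EuclideanSpace ℝ (Fin n),
      ((⟪v, y⟫ : ℝ) : EReal) - ((∑ i, |y i| : ℝ) : EReal) = ((t * (|v i0| - 1) : ℝ) : EReal) := by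
    intro t ht
    set s : ℝ := if 0 ≤ v i0 then 1 else -1 with hs
    refine ⟨WithLp.toLp 2 (fun j => if j = i0 then t * s else 0 : Fin n → ℝ), ?_⟩
    have h1 : (⟪v, WithLp.toLp 2 (fun j => if j = i0 then t * s else 0 : Fin n → ℝ)⟫ : ℝ) = t * |v i0| := by
      rw [inner_eq]
      have : ∀ j : Fin n, v j * (if j = i0 then t * s else 0) = if j = i0 then t * |v i0| else 0 := by
        intro j
        by_cases h : j = i0
        · rw [if_pos h, if_pos h, h]
          rcases le_or_gt 0 (v i0) with h0 | h0
          · rw [hs, if_pos h0, abs_of_nonneg h0]; ring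
          · rw [hs, if_neg h0.not_ge, abs_of_neg h0]; ring
        · simp [h]
      simp only [PiLp.toLp_apply, this]
      simp
    have h2 : (∑ i, |(WithLp.toLp 2 (fun j => if j = i0 then t * s else 0 : Fin n → ℝ)) i|) = t := by
      have : ∀ j : Fin n, |(if j = i0 then t * s else 0 : ℝ)| = if j = i0 then t else 0 := by
        intro j
        by_cases h : j = i0
        · rw [if_pos h, if_pos h, abs_mul, abs_of_nonneg ht, hs]
          rcases le_or_gt 0 (v i0) with h0 | h0
          · rw [if_pos h0]; norm_num
          · rw [if_neg h0.not_ge]; norm_num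
        · simp [h]
      simp only [PiLp.toLp_apply, this]
      simp
    rw [h1, h2, ← EReal.coe_sub]
    congr 1
    ring
  induction b with
  | bot =>
    obtain ⟨y, hy⟩ := key 0 le_rfl
    exact ⟨y, by rw [hy]; exact EReal.bot_lt_coe _⟩
  | coe r =>
    have hc : (0:ℝ) < |v i0| - 1 := by linarith
    set t : ℝ := (max r 0 + 1) / (|v i0| - 1) with htdef
    have ht : 0 ≤ t := by positivity
    obtain ⟨y, hy⟩ := key t ht
    refine ⟨y, ?_⟩
    rw [hy]
    have : r < t * (|v i0| - 1) := by
      rw [htdef, div_mul_cancel₀ _ (ne_of_gt hc)]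
      have := le_max_left r (0:ℝ)
      linarith
    exact_mod_cast this
  | top => exact absurd hb (lt_irrefl _)

lemma mem_esubdiff_iff (n : ℕ) (z : EuclideanSpace ℝ (Fin n)) (hz : ∀ i, |z i| ≤ 1)
    (v : EuclideanSpace ℝ (Fin n)) :
    v ∈ esubdiff (fenchel (fun x : EuclideanSpace ℝ (Fin n) => ((∑ i, |x i| : ℝ) : EReal))) z
      ↔ ∀ i, v i * z i = |v i| := by
  set f := fenchel (fun x : EuclideanSpace ℝ (Fin n) => ((∑ i, |x i| : ℝ) : EReal)) with hf
  have hfz : f z = 0 := fenchel_l1_ball n z hz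
  have step : v ∈ esubdiff f z ↔ ∀ y : EuclideanSpace ℝ (Fin n), (∀ i, |y i| ≤ 1) →
      (⟪v, y - z⟫ : ℝ) ≤ 0 := by
    constructor
    · intro h y hy
      have := h y
      rw [hfz, zero_add, hf, fenchel_l1_ball n y hy] at this
      exact_mod_cast this
    · intro h y
      by_cases hy : ∀ i, |y i| ≤ 1
      · rw [hfz, zero_add, hf, fenchel_l1_ball n y hy]
        exact_mod_cast h y hy
      · push_neg at hy
        obtain ⟨i0, hi0⟩ := hy
        rw [hf, fenchel_l1_top n y i0 hi0]
        exact le_top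
  rw [step]
  constructor
  · intro h
    set y : EuclideanSpace ℝ (Fin n) := WithLp.toLp 2 (fun i => if 0 ≤ v i then 1 else -1 : Fin n → ℝ) with hy
    have hyb : ∀ i, |y i| ≤ 1 := by
      intro i
      rw [hy]
      dsimp only
      split_ifs <;> norm_num
    have h1 := h y hyb
    rw [inner_sub_right] at h1
    have hvy : (⟪v, y⟫ : ℝ) = ∑ i, |v i| := by
      rw [inner_eq]
      apply Finset.sum_congr rfl
      intro i _
      rw [hy]
      dsimp only
      rcases le_or_gt 0 (v i) with h0 | h0
      · rw [if_pos h0, abs_of_nonneg h0]; ring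
      · rw [if_neg h0.not_ge, abs_of_neg h0]; ring
    have hvz : (⟪v, z⟫ : ℝ) = ∑ i, v i * z i := inner_eq n v z
    rw [hvy, hvz] at h1
    have hterm : ∀ i ∈ Finset.univ, v i * z i ≤ |v i| := by
      intro i _
      calc v i * z i ≤ |v i * z i| := le_abs_self _
      _ = |v i| * |z i| := abs_mul _ _
      _ ≤ |v i| * 1 := mul_le_mul_of_nonneg_left (hz i) (abs_nonneg _)
      _ = |v i| := mul_one _
    have hsum : ∑ i, v i * z i = ∑ i, |v i| := by
      have := Finset.sum_le_sum hterm
      linarith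
    intro i
    exact (Finset.sum_eq_sum_iff_of_le hterm).1 hsum i (Finset.mem_univ i)
  · intro h y hy
    rw [inner_sub_right, inner_eq, inner_eq]
    have : ∀ i ∈ Finset.univ, v i * y i ≤ v i * z i := by
      intro i _
      rw [h i]
      calc v i * y i ≤ |v i * y i| := le_abs_self _
      _ = |v i| * |y i| := abs_mul _ _
      _ ≤ |v i| * 1 := mul_le_mul_of_nonneg_left (hy i) (abs_nonneg _)
      _ = |v i| := mul_one _
    have := Finset.sum_le_sum this
    linarith

/-- for the ℓ1 norm `g` on ℝⁿ and `z` with `‖z‖_∞ ≤ 1`, the parallel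
subspace of `∂g*(z)`, i.e. `span (∂g*(z) - x)` for any `x ∈ ∂g*(z)`, equals
`{x : x i = 0 whenever |z i| < 1}`. -/
theorem stmt1 (n : ℕ) (z : EuclideanSpace ℝ (Fin n)) (hz : ∀ i, |z i| ≤ 1)
    (g : EuclideanSpace ℝ (Fin n) → EReal)
    (hg : g = fun x => ((∑ i, |x i| : ℝ) : EReal))
    (x : EuclideanSpace ℝ (Fin n)) (hx : x ∈ esubdiff (fenchel g) z) :
    (Submodule.span ℝ ((fun w => w - x) '' esubdiff (fenchel g) z) : Set (EuclideanSpace ℝ (Fin n)))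
      = {x : EuclideanSpace ℝ (Fin n) | ∀ i, |z i| < 1 → x i = 0} := by
  subst hg
  have hchar : ∀ v : EuclideanSpace ℝ (Fin n),
      v ∈ esubdiff (fenchel (fun x : EuclideanSpace ℝ (Fin n) => ((∑ i, |x i| : ℝ) : EReal))) z
        ↔ ∀ i, v i * z i = |v i| := mem_esubdiff_iff n z hz
  have hzero : ∀ v : EuclideanSpace ℝ (Fin n), (∀ i, v i * z i = |v i|) →
      ∀ i, |z i| < 1 → v i = 0 := by
    intro v hv i hi
    by_contra h0
    have h2 : |v i * z i| < |v i| := by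
      rw [abs_mul]
      calc |v i| * |z i| < |v i| * 1 := mul_lt_mul_of_pos_left hi (abs_pos.2 h0)
      _ = |v i| := mul_one _
    have h3 : |v i| < |v i| := by
      calc |v i| = v i * z i := (hv i).symm
      _ ≤ |v i * z i| := le_abs_self _
      _ < |v i| := h2
    exact lt_irrefl _ h3
  set S : Submodule ℝ (EuclideanSpace ℝ (Fin n)) :=
    { carrier := {w : EuclideanSpace ℝ (Fin n) | ∀ i, |z i| < 1 → w i = 0}
      add_mem' := by
        intro a b ha hb i hi
        have : (a + b) i = a i + b i := rfl
        rw [this, ha i hi, hb i hi, add_zero]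
      zero_mem' := fun i hi => rfl
      smul_mem' := by
        intro c a ha i hi
        have : (c • a) i = c * a i := rfl
        rw [this, ha i hi, mul_zero] } with hS
  ext w
  simp only [SetLike.mem_coe, Set.mem_setOf_eq]
  constructor
  · intro hw
    have hsub : (fun w => w - x) '' esubdiff
        (fenchel (fun x : EuclideanSpace ℝ (Fin n) => ((∑ i, |x i| : ℝ) : EReal))) z ⊆ ↑S := by
      rintro _ ⟨u, hu, rfl⟩
      intro i hi
      show u i - x i = 0
      rw [hzero u ((hchar u).1 hu) i hi, hzero x ((hchar x).1 hx) i hi, sub_zero]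
    exact Submodule.span_le.2 hsub hw
  · intro hw
    have hrepr : ∑ i, w i • (EuclideanSpace.single i (1:ℝ)) = w := by
      apply PiLp.ext
      intro j
      have : (∑ i, w i • (EuclideanSpace.single i (1:ℝ))) j
          = ∑ i, w i * (if j = i then (1:ℝ) else 0) := by
        rw [show ((∑ i, w i • (EuclideanSpace.single i (1:ℝ))) j : ℝ)
            = ∑ i, (w i • (EuclideanSpace.single i (1:ℝ))) j by rw [WithLp.ofLp_sum, Finset.sum_apply]]
        apply Finset.sum_congr rfl
        intro i _
        have h1 : (w i • (EuclideanSpace.single i (1:ℝ))) j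
            = w i * (EuclideanSpace.single i (1:ℝ)) j := rfl
        rw [h1, EuclideanSpace.single_apply]
      rw [this]
      simp
    rw [← hrepr]
    apply Submodule.sum_mem
    intro i _
    by_cases hi : |z i| < 1
    · rw [hw i hi, zero_smul]
      exact Submodule.zero_mem _
    · have hzi : |z i| = 1 := le_antisymm (hz i) (not_lt.1 hi)
      have hzi0 : z i ≠ 0 := by
        intro h
        rw [h] at hzi
        simp at hzi
      have hz2 : z i * z i = 1 := by rw [← abs_mul_abs_self, hzi, one_mul]
      have hmem : z i • (EuclideanSpace.single i (1:ℝ)) ∈ Submodule.span ℝ ((fun w => w - x) ''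
          esubdiff (fenchel (fun x : EuclideanSpace ℝ (Fin n) => ((∑ i, |x i| : ℝ) : EReal))) z) := by
        apply Submodule.subset_span
        refine ⟨x + z i • EuclideanSpace.single i (1:ℝ), ?_, add_sub_cancel_left x _⟩
        rw [hchar]
        intro j
        have hxj := (hchar x).1 hx j
        by_cases hji : j = i
        · subst hji
          have happ : (x + z j • EuclideanSpace.single j (1:ℝ)) j = x j + z j := by
            have h1 : (x + z j • EuclideanSpace.single j (1:ℝ)) j
                = x j + z j * (EuclideanSpace.single j (1:ℝ)) j := rfl
            rw [h1, EuclideanSpace.single_apply, if_pos rfl, mul_one]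
          rw [happ]
          have hxj' : x j = |x j| * z j := by
            have : x j * (z j * z j) = |x j| * z j := by rw [← mul_assoc, hxj]
            rwa [hz2, mul_one] at this
          have h5 : x j + z j = (|x j| + 1) * z j := by
            nth_rewrite 1 [hxj']
            ring
          have h6 : |x j + z j| = |x j| + 1 := by
            rw [h5, abs_mul, hzi, mul_one,
              abs_of_nonneg (by positivity : (0:ℝ) ≤ |x j| + 1)]
          rw [h6, h5]
          linear_combination (|x j| + 1) * hz2
        · have happ : (x + z i • EuclideanSpace.single i (1:ℝ)) j = x j := by
            have h1 : (x + z i • EuclideanSpace.single i (1:ℝ)) j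
                = x j + z i * (EuclideanSpace.single i (1:ℝ)) j := rfl
            rw [h1, EuclideanSpace.single_apply, if_neg hji, mul_zero, add_zero]
          rw [happ]
          exact hxj
      have heq : w i • (EuclideanSpace.single i (1:ℝ)) =
          (w i * (z i)⁻¹) • (z i • (EuclideanSpace.single i (1:ℝ)) : EuclideanSpace ℝ (Fin n)) := by
        rw [smul_smul, mul_assoc, inv_mul_cancel₀ hzi0, mul_one]
      rw [heq]
      exact Submodule.smul_mem _ _ hmem
end
end

section
/- Let D be the (n−1)×n difference matrix and g(x) = ‖Dx‖₁. For z ∈ dom g*, the parallel subspace of ∂g*(z) equals {x ∈ ℝⁿ : x_i = x_{i+1} whenever |z₁ + ⋯ + z_i| < 1, for i = 1,…,n−1}. -/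
open scoped RealInnerProductSpace
noncomputable section

/-- The `(n-1) × n` difference matrix `D` (here with `n = m + 1`). -/
def diffMatrix (m : ℕ) : Matrix (Fin m) (Fin (m + 1)) ℝ :=
  fun i j => if j = i.castSucc then 1 else if j = i.succ then -1 else 0

def tv (m : ℕ) (x : EuclideanSpace ℝ (Fin (m + 1))) : ℝ :=
  ∑ i, |(diffMatrix m).mulVec x i|

lemma mulVec_diff {m : ℕ} (x : Fin (m+1) → ℝ) (i : Fin m) :
    (diffMatrix m).mulVec x i = x i.castSucc - x i.succ := by
  have h : (i.castSucc : Fin (m+1)) ≠ i.succ := by simp [Fin.ext_iff]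
  simp only [diffMatrix, Matrix.mulVec, dotProduct, ite_mul, one_mul, neg_mul, zero_mul]
  have : ∀ j : Fin (m+1), (if j = i.castSucc then x j else if j = i.succ then -x j else 0)
      = (if j = i.castSucc then x i.castSucc else 0) + (if j = i.succ then -x i.succ else 0) := by
    intro j
    by_cases h1 : j = i.castSucc <;> by_cases h2 : j = i.succ <;> simp_all
  rw [Finset.sum_congr rfl (fun j _ => this j), Finset.sum_add_distrib,
    Finset.sum_ite_eq' Finset.univ, Finset.sum_ite_eq' Finset.univ]
  simp; ring

lemma tv_eq {m : ℕ} (x : EuclideanSpace ℝ (Fin (m+1))) :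
    tv m x = ∑ i : Fin m, |x i.castSucc - x i.succ| := by
  simp [tv, mulVec_diff]

lemma inner_eq_dot {m : ℕ} (x y : EuclideanSpace ℝ (Fin (m+1))) :
    (⟪x, y⟫ : ℝ) = ∑ j, x j * y j := by
  simp [PiLp.inner_apply, RCLike.inner_apply, mul_comm]

def Kset (m : ℕ) : Set (EuclideanSpace ℝ (Fin (m + 1))) :=
  {w | ∀ x : EuclideanSpace ℝ (Fin (m + 1)), (∑ j, w j * x j) ≤ tv m x}

lemma tele {m : ℕ} (a : Fin (m+1) → ℝ) (j : Fin (m+1)) :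
    (∑ i ∈ Finset.univ.filter (fun i : Fin m => (j:ℕ) ≤ (i:ℕ)), (a i.castSucc - a i.succ))
      = a j - a (Fin.last m) := by
  set F : ℕ → ℝ := fun k => a ⟨min (max k (j:ℕ)) m, by omega⟩ with hF
  have key : ∑ k ∈ Finset.range m, (F k - F (k+1)) = F 0 - F m := Finset.sum_range_sub' F m
  rw [Finset.sum_filter]
  have step : ∀ i : Fin m, (if (j:ℕ) ≤ (i:ℕ) then a i.castSucc - a i.succ else 0)
      = F (i:ℕ) - F ((i:ℕ)+1) := by
    intro i
    have him : (i:ℕ) < m := i.isLt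
    have hjm : (j:ℕ) ≤ m := by omega
    by_cases hji : (j:ℕ) ≤ (i:ℕ)
    · simp only [hji, if_true, hF]
      have e1 : (⟨min (max (i:ℕ) (j:ℕ)) m, by omega⟩ : Fin (m+1)) = i.castSucc := by
        apply Fin.ext; simp; omega
      have e2 : (⟨min (max ((i:ℕ)+1) (j:ℕ)) m, by omega⟩ : Fin (m+1)) = i.succ := by
        apply Fin.ext; simp; omega
      rw [e1, e2]
    · simp only [hji, if_false, hF]
      have e1 : (⟨min (max (i:ℕ) (j:ℕ)) m, by omega⟩ : Fin (m+1))
          = (⟨min (max ((i:ℕ)+1) (j:ℕ)) m, by omega⟩ : Fin (m+1)) := by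
        apply Fin.ext; simp; omega
      rw [e1, sub_self]
  rw [Finset.sum_congr rfl (fun i _ => step i)]
  rw [show (∑ i : Fin m, (F (i:ℕ) - F ((i:ℕ)+1))) = ∑ k ∈ Finset.range m, (F k - F (k+1)) from
    Fin.sum_univ_eq_sum_range (fun k => F k - F (k+1)) m]
  rw [key]
  have hjm : (j:ℕ) ≤ m := by omega
  have e1 : (⟨min (max 0 (j:ℕ)) m, by omega⟩ : Fin (m+1)) = j := by
    apply Fin.ext; simp; omega
  have e2 : (⟨min (max m (j:ℕ)) m, by omega⟩ : Fin (m+1)) = Fin.last m := by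
    apply Fin.ext; simp only [Fin.val_last]; omega
  rw [show F 0 = a j from congrArg a e1, show F m = a (Fin.last m) from congrArg a e2]

lemma abel_sum {m : ℕ} (z : EuclideanSpace ℝ (Fin (m+1))) (hz0 : ∑ j, z j = 0)
    (a : EuclideanSpace ℝ (Fin (m+1))) :
    ∑ j, a j * z j = ∑ i : Fin m, (a i.castSucc - a i.succ) *
      (∑ j ∈ Finset.univ.filter (fun j : Fin (m+1) => (j:ℕ) ≤ (i:ℕ)), z j) := by
  have step : ∀ i : Fin m, (a i.castSucc - a i.succ) *
      (∑ j ∈ Finset.univ.filter (fun j : Fin (m+1) => (j:ℕ) ≤ (i:ℕ)), z j)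
      = ∑ j : Fin (m+1), (if (j:ℕ) ≤ (i:ℕ) then (a i.castSucc - a i.succ) * z j else 0) := by
    intro i
    rw [Finset.mul_sum, ← Finset.sum_filter]
  have step2 : ∀ j : Fin (m+1),
      (∑ i : Fin m, if (j:ℕ) ≤ (i:ℕ) then (a i.castSucc - a i.succ) * z j else 0)
      = (a j - a (Fin.last m)) * z j := by
    intro j
    rw [← tele a j, Finset.sum_filter, Finset.sum_mul]
    apply Finset.sum_congr rfl
    intro i _
    by_cases hji : (j:ℕ) ≤ (i:ℕ) <;> simp [hji]
  symm
  rw [Finset.sum_congr rfl (fun i _ => step i), Finset.sum_comm,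
    Finset.sum_congr rfl (fun j _ => step2 j)]
  simp only [sub_mul, Finset.sum_sub_distrib]
  rw [← Finset.mul_sum, hz0, mul_zero, sub_zero]

lemma lift_diff {m : ℕ} (w : Fin m → ℝ) (i : Fin m) :
    (∑ k ∈ Finset.univ.filter (fun k : Fin m => ((i.castSucc : Fin (m+1)):ℕ) ≤ (k:ℕ)), w k)
      - (∑ k ∈ Finset.univ.filter (fun k : Fin m => ((i.succ : Fin (m+1)):ℕ) ≤ (k:ℕ)), w k)
      = w i := by
  rw [Finset.sum_filter, Finset.sum_filter, ← Finset.sum_sub_distrib]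
  have step : ∀ k : Fin m,
      ((if ((i.castSucc : Fin (m+1)):ℕ) ≤ (k:ℕ) then w k else 0)
        - (if ((i.succ : Fin (m+1)):ℕ) ≤ (k:ℕ) then w k else 0))
      = if k = i then w k else 0 := by
    intro k
    simp only [Fin.coe_castSucc, Fin.val_succ]
    rcases eq_or_ne k i with h3|h3
    · subst h3; simp
    · have hne : (k:ℕ) ≠ (i:ℕ) := fun h => h3 (Fin.ext h)
      by_cases h1 : (i:ℕ) ≤ (k:ℕ)
      · have h2 : (i:ℕ)+1 ≤ (k:ℕ) := by omega
        simp [h1, h2, h3]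
      · have h2 : ¬((i:ℕ)+1 ≤ (k:ℕ)) := by omega
        simp [h1, h2, h3]
  rw [Finset.sum_congr rfl (fun k _ => step k), Finset.sum_ite_eq' Finset.univ]
  simp

section Fenchel
variable {m : ℕ} {g : EuclideanSpace ℝ (Fin (m+1)) → EReal}

lemma tv_zero : tv m (0 : EuclideanSpace ℝ (Fin (m+1))) = 0 := by
  simp [tv_eq]

lemma fenchel_nonneg (hg : g = fun x => ((tv m x : ℝ) : EReal))
    (w : EuclideanSpace ℝ (Fin (m+1))) : 0 ≤ fenchel g w := by
  have h := le_iSup (fun x => ((⟪w, x⟫ : ℝ) : EReal) - g x) (0 : EuclideanSpace ℝ (Fin (m+1)))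
  simpa [fenchel, hg, tv_zero] using h

lemma fenchel_nonpos (hg : g = fun x => ((tv m x : ℝ) : EReal))
    {w : EuclideanSpace ℝ (Fin (m+1))} (hw : w ∈ Kset m) : fenchel g w ≤ 0 := by
  refine iSup_le fun x => ?_
  have h1 : (⟪w, x⟫ : ℝ) ≤ tv m x := by rw [inner_eq_dot]; exact hw x
  simp only [hg]
  exact_mod_cast sub_nonpos.2 h1

lemma fenchel_top (hg : g = fun x => ((tv m x : ℝ) : EReal))
    {w : EuclideanSpace ℝ (Fin (m+1))} (hw : w ∉ Kset m) : fenchel g w = ⊤ := by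
  rw [EReal.eq_top_iff_forall_lt]
  intro r
  simp only [Kset, Set.mem_setOf_eq, not_forall, not_le] at hw
  obtain ⟨x, hx⟩ := hw
  set δ : ℝ := (∑ j, w j * x j) - tv m x with hδ
  have hδpos : 0 < δ := sub_pos.2 hx
  set t : ℝ := max 0 ((r+1)/δ) with ht
  have ht0 : 0 ≤ t := le_max_left _ _
  have h1 : (⟪w, t • x⟫ : ℝ) = t * (∑ j, w j * x j) := by
    rw [real_inner_smul_right, inner_eq_dot]
  have h2 : tv m (t • x) = t * tv m x := by
    rw [tv_eq, tv_eq, Finset.mul_sum]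
    apply Finset.sum_congr rfl
    intro i _
    have habs : ∀ u v : ℝ, |t*u - t*v| = t * |u - v| := by
      intro u v; rw [← mul_sub, abs_mul, abs_of_nonneg ht0]
    simp [PiLp.smul_apply, smul_eq_mul, habs]
  have hterm : ((⟪w, t • x⟫ : ℝ) : EReal) - g (t • x) = ((t * δ : ℝ) : EReal) := by
    simp only [hg, h1]
    have : t * (∑ j, w j * x j) - tv m (t • x) = t * δ := by rw [h2, hδ]; ring
    exact_mod_cast congrArg (fun r : ℝ => (r : EReal)) this
  have hle : ((t * δ : ℝ) : EReal) ≤ fenchel g w := by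
    rw [← hterm]
    exact le_iSup (fun x : EuclideanSpace ℝ (Fin (m+1)) => ((⟪w, x⟫ : ℝ) : EReal) - g x) (t • x)
  refine lt_of_lt_of_le ?_ hle
  have hrt : r < t * δ := by
    have h3 : (r+1)/δ ≤ t := le_max_right _ _
    have h4 := mul_le_mul_of_nonneg_right h3 hδpos.le
    rw [div_mul_cancel₀ _ hδpos.ne'] at h4
    linarith
  exact_mod_cast hrt

lemma esubdiff_char (hg : g = fun x => ((tv m x : ℝ) : EReal))
    {z : EuclideanSpace ℝ (Fin (m+1))} (hzK : z ∈ Kset m) :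
    esubdiff (fenchel g) z
      = {a | ∀ w ∈ Kset m, (∑ j, a j * w j) ≤ ∑ j, a j * z j} := by
  ext a
  constructor
  · intro ha w hw
    have h1 := ha w
    have h4 : ((⟪a, w - z⟫ : ℝ) : EReal) ≤ 0 := by
      calc ((⟪a, w - z⟫ : ℝ) : EReal) = 0 + ((⟪a, w - z⟫ : ℝ) : EReal) := (zero_add _).symm
        _ ≤ fenchel g z + ((⟪a, w - z⟫ : ℝ) : EReal) :=
            add_le_add_left (fenchel_nonneg hg z) _
        _ ≤ fenchel g w := h1
        _ ≤ 0 := fenchel_nonpos hg hw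
    have h5 : (⟪a, w - z⟫ : ℝ) ≤ 0 := by exact_mod_cast h4
    rw [inner_sub_right, inner_eq_dot, inner_eq_dot] at h5
    linarith
  · intro ha w
    by_cases hw : w ∈ Kset m
    · have h5 : (⟪a, w - z⟫ : ℝ) ≤ 0 := by
        rw [inner_sub_right, inner_eq_dot, inner_eq_dot]
        have := ha w hw
        linarith
      calc fenchel g z + ((⟪a, w - z⟫ : ℝ) : EReal)
          ≤ 0 + 0 := add_le_add (fenchel_nonpos hg hzK) (by exact_mod_cast h5)
        _ = 0 := by simp
        _ ≤ fenchel g w := fenchel_nonneg hg w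
    · rw [fenchel_top hg hw]; exact le_top

end Fenchel

lemma sum_z_zero {m : ℕ} {z : EuclideanSpace ℝ (Fin (m+1))} (hz : z ∈ Kset m) :
    ∑ j, z j = 0 := by
  have h1 := hz (WithLp.toLp 2 (fun _ => 1))
  have h2 := hz (WithLp.toLp 2 (fun _ => -1))
  simp [tv_eq] at h1 h2
  linarith

lemma abs_partial_le {m : ℕ} {z : EuclideanSpace ℝ (Fin (m+1))} (hz : z ∈ Kset m) (i : Fin m) :
    |∑ j ∈ Finset.univ.filter (fun j : Fin (m+1) => (j:ℕ) ≤ (i:ℕ)), z j| ≤ 1 := by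
  set x : EuclideanSpace ℝ (Fin (m+1)) := WithLp.toLp 2 (fun j : Fin (m+1) => if (j:ℕ) ≤ (i:ℕ) then (1:ℝ) else 0) with hx
  have hdot : ∑ j, z j * x j = ∑ j ∈ Finset.univ.filter (fun j : Fin (m+1) => (j:ℕ) ≤ (i:ℕ)), z j := by
    rw [Finset.sum_filter]
    apply Finset.sum_congr rfl
    intro j _
    by_cases h : (j:ℕ) ≤ (i:ℕ) <;> simp [hx, h]
  have htv : tv m x = 1 := by
    rw [tv_eq]
    have step : ∀ k : Fin m, |x k.castSucc - x k.succ| = if k = i then 1 else 0 := by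
      intro k
      simp only [hx, PiLp.toLp_apply, Fin.coe_castSucc, Fin.val_succ]
      rcases eq_or_ne k i with h|h
      · subst h
        have h2 : ¬((k:ℕ)+1 ≤ (k:ℕ)) := by omega
        simp [h2]
      · have hne : (k:ℕ) ≠ (i:ℕ) := fun hh => h (Fin.ext hh)
        by_cases h1 : (k:ℕ) ≤ (i:ℕ)
        · have h2 : (k:ℕ)+1 ≤ (i:ℕ) := by omega
          simp [h1, h2, h]
        · have h2 : ¬((k:ℕ)+1 ≤ (i:ℕ)) := by omega
          simp [h1, h2, h]
    rw [Finset.sum_congr rfl (fun k _ => step k), Finset.sum_ite_eq' Finset.univ]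
    simp
  have htvneg : tv m (-x) = 1 := by
    rw [tv_eq]
    rw [show (∑ k : Fin m, |(-x) k.castSucc - (-x) k.succ|) = ∑ k : Fin m, |x k.castSucc - x k.succ| from
      Finset.sum_congr rfl (fun k _ => by
        simp only [PiLp.neg_apply]
        rw [show -x k.castSucc - -x k.succ = -(x k.castSucc - x k.succ) from by ring, abs_neg])]
    rw [← tv_eq, htv]
  have h1 := hz x
  have h2 := hz (-x)
  rw [htv, hdot] at h1
  rw [htvneg] at h2
  have h2' : -(∑ j ∈ Finset.univ.filter (fun j : Fin (m+1) => (j:ℕ) ≤ (i:ℕ)), z j) ≤ 1 := by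
    rw [← hdot]
    calc -(∑ j, z j * x j) = ∑ j, z j * (-x) j := by
          rw [← Finset.sum_neg_distrib]
          apply Finset.sum_congr rfl
          intro j _
          simp
      _ ≤ 1 := h2
  rw [abs_le]
  constructor <;> linarith

lemma mem_N_of_eq {m : ℕ} {z : EuclideanSpace ℝ (Fin (m+1))} (hz0 : ∑ j, z j = 0)
    (a : EuclideanSpace ℝ (Fin (m+1)))
    (h : ∀ i : Fin m, (a i.castSucc - a i.succ) *
        (∑ j ∈ Finset.univ.filter (fun j : Fin (m+1) => (j:ℕ) ≤ (i:ℕ)), z j)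
        = |a i.castSucc - a i.succ|) :
    ∀ w ∈ Kset m, (∑ j, a j * w j) ≤ ∑ j, a j * z j := by
  intro w hw
  have h1 : ∑ j, a j * w j ≤ tv m a := by
    calc ∑ j, a j * w j = ∑ j, w j * a j := Finset.sum_congr rfl (fun j _ => mul_comm _ _)
      _ ≤ tv m a := hw a
  have h2 : ∑ j, a j * z j = tv m a := by
    rw [abel_sum z hz0 a, tv_eq]
    exact Finset.sum_congr rfl (fun i _ => h i)
  linarith

lemma N_flat {m : ℕ} {z : EuclideanSpace ℝ (Fin (m+1))} (hzK : z ∈ Kset m)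
    (hz0 : ∑ j, z j = 0)
    (a : EuclideanSpace ℝ (Fin (m+1)))
    (haN : ∀ w ∈ Kset m, (∑ j, a j * w j) ≤ ∑ j, a j * z j)
    (i₀ : Fin m)
    (hi₀ : |∑ j ∈ Finset.univ.filter (fun j : Fin (m+1) => (j:ℕ) ≤ (i₀:ℕ)), z j| < 1) :
    a i₀.castSucc = a i₀.succ := by
  set y : Fin m → ℝ :=
    fun i => ∑ j ∈ Finset.univ.filter (fun j : Fin (m+1) => (j:ℕ) ≤ (i:ℕ)), z j with hy
  have hyle : ∀ i, |y i| ≤ 1 := fun i => abs_partial_le hzK i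
  set v : Fin m → ℝ := fun i => a i.castSucc - a i.succ with hv
  set u : Fin m → ℝ := fun i => if i = i₀ then (if 0 ≤ v i₀ then 1 else -1) else y i with hu
  have hu_le : ∀ i, |u i| ≤ 1 := by
    intro i
    rw [hu]
    rcases eq_or_ne i i₀ with h|h
    · subst h; split_ifs <;> simp
    · simp [h, hyle i]
  set w : EuclideanSpace ℝ (Fin (m+1)) := WithLp.toLp 2 (fun j => ∑ i, u i * diffMatrix m i j) with hw
  have hswap : ∀ x : EuclideanSpace ℝ (Fin (m+1)),
      ∑ j, w j * x j = ∑ i, u i * (x i.castSucc - x i.succ) := by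
    intro x
    calc ∑ j, w j * x j = ∑ j, ∑ i, u i * diffMatrix m i j * x j := by
          apply Finset.sum_congr rfl
          intro j _
          rw [hw, PiLp.toLp_apply, Finset.sum_mul]
      _ = ∑ i, ∑ j, u i * diffMatrix m i j * x j := Finset.sum_comm
      _ = ∑ i, u i * (x i.castSucc - x i.succ) := by
          apply Finset.sum_congr rfl
          intro i _
          rw [← mulVec_diff x i]
          simp [Matrix.mulVec, dotProduct, Finset.mul_sum, mul_assoc]
  have hwK : w ∈ Kset m := by
    intro x
    rw [hswap x, tv_eq]
    apply Finset.sum_le_sum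
    intro i _
    calc u i * (x i.castSucc - x i.succ) ≤ |u i * (x i.castSucc - x i.succ)| := le_abs_self _
      _ = |u i| * |x i.castSucc - x i.succ| := abs_mul _ _
      _ ≤ 1 * |x i.castSucc - x i.succ| :=
          mul_le_mul_of_nonneg_right (hu_le i) (abs_nonneg _)
      _ = |x i.castSucc - x i.succ| := one_mul _
  have h1 := haN w hwK
  have hcomm : ∑ j, a j * w j = ∑ j, w j * a j :=
    Finset.sum_congr rfl (fun j _ => mul_comm _ _)
  rw [hcomm, hswap a, abel_sum z hz0 a] at h1
  have hsingle : (∑ i, u i * (a i.castSucc - a i.succ))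
      - (∑ i : Fin m, (a i.castSucc - a i.succ) *
      (∑ j ∈ Finset.univ.filter (fun j : Fin (m+1) => (j:ℕ) ≤ (i:ℕ)), z j))
      = v i₀ * u i₀ - v i₀ * y i₀ := by
    rw [← Finset.sum_sub_distrib]
    rw [Finset.sum_eq_single i₀]
    · simp only [hv, hy]; ring
    · intro i _ hne
      simp only [hu, hv, hy]
      simp [hne]
      ring
    · intro habs; exact absurd (Finset.mem_univ i₀) habs
  have h2 : v i₀ * u i₀ ≤ v i₀ * y i₀ := by
    linarith [h1, hsingle]
  have hy0 : |y i₀| < 1 := hi₀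
  have hveq : v i₀ = 0 := by
    simp only [hu, if_pos rfl] at h2
    by_cases hs : 0 ≤ v i₀
    · rw [if_pos hs] at h2
      by_contra hne
      have hvpos : 0 < v i₀ := lt_of_le_of_ne hs (Ne.symm hne)
      have := mul_lt_mul_of_pos_left (abs_lt.mp hy0).2 hvpos
      rw [mul_one] at h2
      linarith
    · rw [if_neg hs] at h2
      push_neg at hs
      have := mul_lt_mul_of_neg_left (abs_lt.mp hy0).1 hs
      rw [mul_neg_one] at h2
      linarith
  simp only [hv] at hveq
  linarith [hveq]

/-- for the 1D total variation `g(x) = ‖Dx‖₁` and `z ∈ dom g*`,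
the parallel subspace of `∂g*(z)` equals
`{x : x_i = x_{i+1} whenever |z₁ + ⋯ + z_i| < 1, i = 1, …, n-1}`. -/
theorem stmt14 (m : ℕ)
    (g : EuclideanSpace ℝ (Fin (m + 1)) → EReal)
    (hg : g = fun (x : EuclideanSpace ℝ (Fin (m + 1))) => ((∑ i, |(diffMatrix m).mulVec (WithLp.ofLp x) i| : ℝ) : EReal))
    (z : EuclideanSpace ℝ (Fin (m + 1))) (hz : fenchel g z ≠ ⊤)
    (x₀ : EuclideanSpace ℝ (Fin (m + 1))) (hx₀ : x₀ ∈ esubdiff (fenchel g) z) :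
    (Submodule.span ℝ ((fun w => w - x₀) '' esubdiff (fenchel g) z)
        : Set (EuclideanSpace ℝ (Fin (m + 1))))
      = {x : EuclideanSpace ℝ (Fin (m + 1)) |
          ∀ i : Fin m,
            |∑ j ∈ Finset.univ.filter (fun j : Fin (m + 1) => (j : ℕ) ≤ (i : ℕ)), z j| < 1 →
              x i.castSucc = x i.succ} := by
  have hg' : g = fun x => ((tv m x : ℝ) : EReal) := hg
  have hzK : z ∈ Kset m := by
    by_contra h
    exact hz (fenchel_top hg' h)
  have hz0 : ∑ j, z j = 0 := sum_z_zero hzK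
  have hchar := esubdiff_char hg' hzK
  rw [hchar] at hx₀ ⊢
  apply Set.Subset.antisymm
  · -- span ⊆ RHS
    have hS : ∀ a : EuclideanSpace ℝ (Fin (m+1)),
        (∀ w ∈ Kset m, (∑ j, a j * w j) ≤ ∑ j, a j * z j) →
        ∀ i : Fin m,
          |∑ j ∈ Finset.univ.filter (fun j : Fin (m + 1) => (j : ℕ) ≤ (i : ℕ)), z j| < 1 →
          a i.castSucc = a i.succ := fun a haN i hi => N_flat hzK hz0 a haN i hi
    let S' : Submodule ℝ (EuclideanSpace ℝ (Fin (m+1))) :=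
      { carrier := {x : EuclideanSpace ℝ (Fin (m + 1)) |
          ∀ i : Fin m,
            |∑ j ∈ Finset.univ.filter (fun j : Fin (m + 1) => (j : ℕ) ≤ (i : ℕ)), z j| < 1 →
              x i.castSucc = x i.succ}
        add_mem' := by
          intro p q hp hq i hi
          have h1 := hp i hi
          have h2 := hq i hi
          simp only [PiLp.add_apply, h1, h2]
        zero_mem' := by intro i hi; simp
        smul_mem' := by
          intro c p hp i hi
          have h1 := hp i hi
          simp only [PiLp.smul_apply, h1] }
    have hspan : Submodule.span ℝ
        ((fun w => w - x₀) '' {a | ∀ w ∈ Kset m, (∑ j, a j * w j) ≤ ∑ j, a j * z j}) ≤ S' := by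
      apply Submodule.span_le.2
      rintro _ ⟨a, haN, rfl⟩
      intro i hi
      have h1 := hS a haN i hi
      have h2 := hS x₀ hx₀ i hi
      simp only [PiLp.sub_apply, h1, h2]
    exact fun x hx => hspan hx
  · -- RHS ⊆ span
    intro x hx
    simp only [Set.mem_setOf_eq] at hx
    have hyle : ∀ i : Fin m,
        |∑ j ∈ Finset.univ.filter (fun j : Fin (m + 1) => (j : ℕ) ≤ (i : ℕ)), z j| ≤ 1 :=
      fun i => abs_partial_le hzK i
    set y : Fin m → ℝ :=
      fun i => ∑ j ∈ Finset.univ.filter (fun j : Fin (m+1) => (j:ℕ) ≤ (i:ℕ)), z j with hy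
    set v : Fin m → ℝ := fun i => x i.castSucc - x i.succ with hv
    set wv : Fin m → ℝ := fun i => |v i| * y i with hwv
    set a : EuclideanSpace ℝ (Fin (m+1)) :=
      WithLp.toLp 2 (fun j : Fin (m+1) => ∑ k ∈ Finset.univ.filter (fun k : Fin m => (j:ℕ) ≤ (k:ℕ)), wv k) with ha
    have hDa : ∀ i : Fin m, a i.castSucc - a i.succ = wv i := by
      intro i
      exact lift_diff wv i
    set b : EuclideanSpace ℝ (Fin (m+1)) := a - x with hb
    have hDb : ∀ i : Fin m, b i.castSucc - b i.succ = wv i - v i := by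
      intro i
      simp only [hb, PiLp.sub_apply]
      have := hDa i
      simp only [hv]
      linarith [this]
    have case_i : ∀ i : Fin m, v i = 0 ∨ y i = 1 ∨ y i = -1 := by
      intro i
      by_cases h1 : |y i| < 1
      · left
        simp only [hv]
        have := hx i h1
        linarith [this]
      · right
        have h2 := hyle i
        have h2' : |y i| = 1 := le_antisymm h2 (not_lt.1 h1)
        rcases abs_eq (by norm_num : (0:ℝ) ≤ 1) |>.1 h2' with h|h
        · exact Or.inl h
        · exact Or.inr h
    have hkey_a : ∀ i : Fin m, (a i.castSucc - a i.succ) *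
        (∑ j ∈ Finset.univ.filter (fun j : Fin (m+1) => (j:ℕ) ≤ (i:ℕ)), z j)
        = |a i.castSucc - a i.succ| := by
      intro i
      rw [hDa i]
      simp only [hwv]
      rcases case_i i with h|h|h
      · simp [h]
      · rw [show (∑ j ∈ Finset.univ.filter (fun j : Fin (m+1) => (j:ℕ) ≤ (i:ℕ)), z j) = y i
          from rfl, h]
        simp [abs_abs]
      · rw [show (∑ j ∈ Finset.univ.filter (fun j : Fin (m+1) => (j:ℕ) ≤ (i:ℕ)), z j) = y i
          from rfl, h]
        simp [abs_abs]
    have hkey_b : ∀ i : Fin m, (b i.castSucc - b i.succ) *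
        (∑ j ∈ Finset.univ.filter (fun j : Fin (m+1) => (j:ℕ) ≤ (i:ℕ)), z j)
        = |b i.castSucc - b i.succ| := by
      intro i
      rw [hDb i]
      simp only [hwv]
      rw [show (∑ j ∈ Finset.univ.filter (fun j : Fin (m+1) => (j:ℕ) ≤ (i:ℕ)), z j) = y i
        from rfl]
      rcases case_i i with h|h|h
      · simp [h]
      · rw [h, mul_one, mul_one, abs_of_nonneg (sub_nonneg.2 (le_abs_self _))]
      · rw [h]
        have h0 : (0:ℝ) ≤ |v i| + v i := by linarith [neg_abs_le (v i)]
        rw [show |v i| * (-1:ℝ) - v i = -(|v i| + v i) from by ring, abs_neg,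
          abs_of_nonneg h0]
        ring
    have haN := mem_N_of_eq hz0 a hkey_a
    have hbN := mem_N_of_eq hz0 b hkey_b
    have hx_eq : x = (a - x₀) - (b - x₀) := by
      rw [sub_sub_sub_cancel_right, hb, sub_sub_cancel]
    rw [hx_eq]
    exact Submodule.sub_mem _ (Submodule.subset_span ⟨a, haN, rfl⟩)
      (Submodule.subset_span ⟨b, hbN, rfl⟩)
end
end
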